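/- Let K be a compact Hausdorff space that is not an almost P-space, i.e., K has a nonempty Gδ subset with empty interior. Then there exists an injective bounded linear operator T : C(K) → C(K) whose range is not closed; in particular T is injective but not surjective and not an isomorphism onto its range. -/

import Mathlib

set_option maxHeartbeats 800000

open Set

/-- If a compact Hausdorff space `K` is not an almost P-space (i.e. it has a nonempty
Gδ subset with empty interior), then there exists an injective bounded linear operator
on `C(K)` whose range is not closed; in particular it is not surjective and not an
isomorphism onto its range. -/
theorem exists_injective_nonclosed_range_of_not_almostPSpace
    (K : Type*) [TopologicalSpace K] [CompactSpace K] [T2Space K]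
    (G : Set K) (hGδ : IsGδ G) (hne : G.Nonempty) (hint : interior G = ∅) :
    ∃ T : C(K, ℝ) →L[ℝ] C(K, ℝ), Function.Injective T ∧
      ¬ IsClosed (Set.range T) ∧ ¬ Function.Surjective T ∧
      ¬ ∃ c > (0:ℝ), ∀ f : C(K, ℝ), c * ‖f‖ ≤ ‖T f‖ := by
  obtain ⟨p, hp⟩ := hne
  obtain ⟨U, U_open, hU⟩ := hGδ.eq_iInter_nat
  -- Build a nested sequence of open neighborhoods of `p` with closures inside the `U n`.
  have key : ∀ (W : Set K), IsOpen W → p ∈ W → ∀ n : ℕ,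
      ∃ V : Set K, IsOpen V ∧ p ∈ V ∧ closure V ⊆ W ∩ U n := by
    intro W hW hpW n
    have hmem : W ∩ U n ∈ nhds p := by
      refine Filter.inter_mem (hW.mem_nhds hpW) ((U_open n).mem_nhds ?_)
      have : p ∈ ⋂ n, U n := by rwa [← hU]
      exact Set.mem_iInter.1 this n
    obtain ⟨t, ht_mem, ht_closed, ht_sub⟩ := exists_mem_nhds_isClosed_subset hmem
    refine ⟨interior t, isOpen_interior, mem_interior_iff_mem_nhds.2 ht_mem, ?_⟩
    exact (closure_minimal interior_subset ht_closed).trans ht_sub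
  choose! F hFopen hFp hFsub using key
  set V : ℕ → Set K := fun n => Nat.rec (F Set.univ 0) (fun n Vn => F Vn (n + 1)) n with hV
  have hVprop : ∀ n, IsOpen (V n) ∧ p ∈ V n ∧ closure (V n) ⊆ U n := by
    intro n
    induction n with
    | zero =>
      have h := hFsub Set.univ isOpen_univ (mem_univ p) 0
      exact ⟨hFopen _ isOpen_univ (mem_univ p) 0, hFp _ isOpen_univ (mem_univ p) 0,
        h.trans inter_subset_right⟩
    | succ n ih =>
      have h := hFsub (V n) ih.1 ih.2.1 (n + 1)
      exact ⟨hFopen _ ih.1 ih.2.1 (n + 1), hFp _ ih.1 ih.2.1 (n + 1),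
        h.trans inter_subset_right⟩
  have hVnest : ∀ n, closure (V (n + 1)) ⊆ V n := by
    intro n
    exact (hFsub (V n) (hVprop n).1 (hVprop n).2.1 (n + 1)).trans inter_subset_left
  set s : Set K := ⋂ n, closure (V n) with hs
  have hs_eq : s = ⋂ n, V n := by
    apply Set.Subset.antisymm
    · intro x hx
      refine Set.mem_iInter.2 fun n => ?_
      exact hVnest n (Set.mem_iInter.1 hx (n + 1))
    · exact Set.iInter_mono fun n => subset_closure
  have hs_closed : IsClosed s := isClosed_iInter fun n => isClosed_closure
  have hs_gd : IsGδ s := by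
    rw [hs_eq]; exact .iInter_of_isOpen fun n => (hVprop n).1
  have hps : p ∈ s := Set.mem_iInter.2 fun n => subset_closure (hVprop n).2.1
  have hsG : s ⊆ G := by
    rw [hU]
    exact Set.iInter_mono fun n => (hVprop n).2.2
  -- Urysohn-type function `f` with `f ⁻¹' {1} = s`.
  obtain ⟨f, hf_pre, -, -, hf_range⟩ :=
    exists_continuous_one_zero_of_isCompact_of_isGδ hs_closed.isCompact hs_gd isClosed_empty
      (disjoint_empty s)
  set φ : C(K, ℝ) := 1 - f with hφ
  have hφ_nonneg : ∀ x, 0 ≤ φ x := fun x => by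
    simp only [hφ, ContinuousMap.sub_apply, ContinuousMap.one_apply]
    linarith [(hf_range x).2]
  have hφ_zero : ∀ x, φ x = 0 ↔ x ∈ s := by
    intro x
    simp only [hφ, ContinuousMap.sub_apply, ContinuousMap.one_apply, sub_eq_zero]
    constructor
    · intro h; rw [hf_pre]; exact h.symm
    · intro h; rw [hf_pre] at h; exact h.symm
  have hφp : φ p = 0 := (hφ_zero p).2 hps
  set T : C(K, ℝ) →L[ℝ] C(K, ℝ) := ContinuousLinearMap.mul ℝ C(K, ℝ) φ with hT
  have hTapp : ∀ g : C(K, ℝ), T g = φ * g := fun g => rfl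
  -- Injectivity
  have hinj : Function.Injective T := by
    intro g h hgh
    have hzero : ∀ x, φ x * (g - h) x = 0 := by
      intro x
      have : φ * g = φ * h := hgh
      have := ContinuousMap.congr_fun this x
      simp only [ContinuousMap.mul_apply] at this
      simp only [ContinuousMap.sub_apply]
      ring_nf
      linarith
    have hdense : Dense {x | φ x ≠ 0} := by
      rw [dense_iff_closure_eq]
      have : {x | φ x ≠ 0} = sᶜ := by
        ext x; simp [hφ_zero x]
      rw [this, closure_compl, eq_univ_iff_forall]
      intro x hx
      have : interior s ⊆ interior G := interior_mono hsG
      rw [hint] at this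
      exact this hx
    have : g - h = 0 := by
      ext x
      have : (fun x => (g - h) x) = fun _ => (0 : ℝ) := by
        apply Continuous.ext_on hdense (g - h).continuous continuous_const
        intro x hx
        have := hzero x
        exact (mul_eq_zero.1 this).resolve_left hx
      simpa using congr_fun this x
    have := sub_eq_zero.1 this
    exact this
  -- Not bounded below
  have hbb : ¬ ∃ c > (0:ℝ), ∀ g : C(K, ℝ), c * ‖g‖ ≤ ‖T g‖ := by
    rintro ⟨c, hc, hle⟩
    set W : Set K := {x | φ x < c / 2} with hW
    have hW_open : IsOpen W := isOpen_lt φ.continuous continuous_const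
    have hpW : p ∈ W := by simp [hW, hφp]; positivity
    obtain ⟨g, hg0, hg1, hg_range⟩ :=
      exists_continuous_zero_one_of_isClosed hW_open.isClosed_compl isClosed_singleton
        (Set.disjoint_singleton_right.2 fun h => h hpW)
    have hgp : g p = 1 := hg1 rfl
    have hgnorm : (1:ℝ) ≤ ‖g‖ := by
      have := g.norm_coe_le_norm p
      rw [hgp] at this
      simpa using this
    have hTg : ‖T g‖ ≤ c / 2 := by
      rw [hTapp]
      rw [ContinuousMap.norm_le _ (by positivity)]
      intro x
      simp only [ContinuousMap.mul_apply]
      by_cases hx : x ∈ W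
      · have h1 : 0 ≤ φ x := hφ_nonneg x
        have h2 : φ x < c / 2 := hx
        have h3 : 0 ≤ g x := (hg_range x).1
        have h4 : g x ≤ 1 := (hg_range x).2
        rw [Real.norm_eq_abs, abs_of_nonneg (by positivity)]
        calc φ x * g x ≤ φ x * 1 := by nlinarith
          _ ≤ c / 2 := by linarith
      · have : g x = 0 := hg0 hx
        rw [this, mul_zero, norm_zero]; positivity
    have : c * ‖g‖ ≤ c / 2 := (hle g).trans hTg
    nlinarith
  -- Not closed range
  have hncl : ¬ IsClosed (Set.range T) := by
    intro hclosed
    apply hbb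
    set R : Submodule ℝ C(K, ℝ) := LinearMap.range (T : C(K, ℝ) →ₗ[ℝ] C(K, ℝ)) with hR
    have hRset : (R : Set C(K, ℝ)) = Set.range T := by
      simp [hR, LinearMap.coe_range, ContinuousLinearMap.coe_coe]
    haveI : CompleteSpace R :=
      (show IsClosed (R : Set C(K, ℝ)) from hRset ▸ hclosed).completeSpace_coe
    set S : C(K, ℝ) →L[ℝ] R := T.codRestrict R fun x => LinearMap.mem_range_self _ x with hS
    have hSker : LinearMap.ker (S : C(K, ℝ) →ₗ[ℝ] R) = ⊥ := by
      rw [LinearMap.ker_eq_bot']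
      intro g hg
      apply hinj
      show T g = T 0
      rw [map_zero]
      exact congrArg Subtype.val hg
    have hSrange : LinearMap.range (S : C(K, ℝ) →ₗ[ℝ] R) = ⊤ := by
      rw [LinearMap.range_eq_top]
      rintro ⟨y, hy⟩
      obtain ⟨x, hx⟩ := hy
      exact ⟨x, Subtype.ext hx⟩
    let e := ContinuousLinearEquiv.ofBijective (𝕜 := ℝ) (𝕜' := ℝ) (σ := RingHom.id ℝ) (E := C(K, ℝ)) (F := R) S
      (by exact hSker) (by exact hSrange)
    have heS : ∀ g, e g = S g := fun g => rfl
    obtain ⟨C, hC⟩ := T.antilipschitz_of_injective_of_isClosed_range hinj hclosed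
    refine ⟨((C : ℝ) + 1)⁻¹, by positivity, fun g => ?_⟩
    have h1 : ‖g‖ ≤ ((C : ℝ) + 1) * ‖T g‖ := by
      have h3 := hC.le_mul_dist g 0
      rw [map_zero, dist_zero_right, dist_zero_right] at h3
      nlinarith [norm_nonneg (T g), h3]
    rw [inv_mul_le_iff₀ (by positivity)]
    linarith
  -- Not surjective
  have hnsurj : ¬ Function.Surjective T := by
    intro hsurj
    obtain ⟨g, hg⟩ := hsurj 1
    have := ContinuousMap.congr_fun (hTapp g ▸ hg : φ * g = 1) p
    simp [hφp] at this
  exact ⟨T, hinj, hncl, hnsurj, hbb⟩
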